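/- Let G be a finitely generated group with generating set S containing a generating set of a subgroup Q, and suppose Q is infinite, finitely generated, commensurated in G, and of infinite index in G. Then the Cayley graph Γ(G,S) is one-ended: for every finite subset C of G, the complement G − C has exactly one component (in the Cayley graph) that is infinite, and any two elements outside a suitable larger finite set can be joined by a path avoiding C. -/

import Mathlib

def Commensurated {G : Type*} [Group G] (Q : Subgroup G) : Prop :=
  ∀ g : G, (Q.map (MulAut.conj g).toMonoidHom ⊓ Q).relIndex Q ≠ 0 ∧
    (Q.map (MulAut.conj g).toMonoidHom ⊓ Q).relIndex (Q.map (MulAut.conj g).toMonoidHom) ≠ 0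

/-- `x` and `y` are joined by an edge path of the Cayley graph of `(G,S)` avoiding `C`. -/
def ConnAvoiding {G : Type*} [Group G] (S C : Set G) : G → G → Prop :=
  Relation.ReflTransGen (fun a b => a ∉ C ∧ b ∉ C ∧ a⁻¹ * b ∈ S ∪ S⁻¹)

open Pointwise

section Aux
variable {G : Type*} [Group G]

lemma connAvoiding_symm {S C : Set G} {x y : G} (h : ConnAvoiding S C x y) :
    ConnAvoiding S C y x := by
  refine (@Relation.ReflTransGen.stdSymm _ _ ⟨?_⟩).symm _ _ h
  rintro a b ⟨ha, hb, hs⟩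
  refine ⟨hb, ha, ?_⟩
  have hba : b⁻¹ * a = (a⁻¹ * b)⁻¹ := by group
  rw [hba]
  rcases hs with h' | h'
  · exact Or.inr (by simpa [Set.mem_inv] using h')
  · exact Or.inl (by simpa using Set.mem_inv.mp h')

lemma connAvoiding_mono {S T C : Set G} (hTS : T ⊆ S) {x y : G}
    (h : ConnAvoiding T C x y) : ConnAvoiding S C x y := by
  refine Relation.ReflTransGen.mono ?_ _ _ h
  rintro a b ⟨ha, hb, hs⟩
  refine ⟨ha, hb, ?_⟩
  rcases hs with h' | h'
  · exact Or.inl (hTS h')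
  · exact Or.inr (Set.inv_subset_inv.mpr hTS h')

lemma connAvoiding_notMem {S C : Set G} {x y : G} (hx : x ∉ C)
    (h : ConnAvoiding S C x y) : y ∉ C := by
  induction h with
  | refl => exact hx
  | tail _ step _ => exact step.2.1

lemma connAvoiding_mem_closure {T C : Set G} {x y : G}
    (h : ConnAvoiding T C x y) : x⁻¹ * y ∈ Subgroup.closure T := by
  induction h with
  | refl => simpa using (Subgroup.closure T).one_mem
  | tail _ step ih =>
      rename_i b c _
      have hbc : b⁻¹ * c ∈ Subgroup.closure T := by
        rcases step.2.2 with h' | h'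
        · exact Subgroup.subset_closure h'
        · exact Subgroup.inv_subset_closure T h'
      have : x⁻¹ * c = (x⁻¹ * b) * (b⁻¹ * c) := by group
      rw [this]
      exact (Subgroup.closure T).mul_mem ih hbc

lemma connAvoiding_of_list {S C : Set G} :
    ∀ (l : List G) (a : G), (∀ t ∈ l, t ∈ S ∪ S⁻¹) →
      (∀ n, a * (l.take n).prod ∉ C) → ConnAvoiding S C a (a * l.prod)
  | [], a, _, _ => by
      rw [List.prod_nil, mul_one]
      exact Relation.ReflTransGen.refl
  | t :: l, a, hl, hC => by
      have h0 : a ∉ C := by simpa using hC 0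
      have h1 : a * t ∉ C := by simpa using hC 1
      have step : a ∉ C ∧ a * t ∉ C ∧ a⁻¹ * (a * t) ∈ S ∪ S⁻¹ :=
        ⟨h0, h1, by simpa using hl t (by simp)⟩
      have ih := connAvoiding_of_list l (a * t)
        (fun s hs => hl s (by simp [hs]))
        (fun n => by simpa [List.take_succ_cons, mul_assoc] using hC (n + 1))
      have : ConnAvoiding S C (a * t) (a * (t :: l).prod) := by
        simpa [mul_assoc] using ih
      exact Relation.ReflTransGen.head step this

lemma exists_list_subgroup {T : Set G} {c : G} (h : c ∈ Subgroup.closure T) :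
    ∃ l : List G, (∀ t ∈ l, t ∈ T ∪ T⁻¹) ∧ l.prod = c := by
  have h' : c ∈ Submonoid.closure (T ∪ T⁻¹) := by
    rw [← Subgroup.closure_toSubmonoid]; exact h
  exact Submonoid.exists_list_of_mem_closure h'

lemma connAvoiding_coset {T C : Set G} {a c : G} (hc : c ∈ Subgroup.closure T)
    (hdisj : ∀ q ∈ Subgroup.closure T, a * q ∉ C) :
    ConnAvoiding T C a (a * c) := by
  obtain ⟨l, hl, rfl⟩ := exists_list_subgroup hc
  refine connAvoiding_of_list l a hl ?_
  intro n
  refine hdisj _ ?_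
  refine Subgroup.list_prod_mem _ ?_
  intro t ht
  have ht' := hl t (List.take_subset n l ht)
  rcases ht' with h' | h'
  · exact Subgroup.subset_closure h'
  · exact Subgroup.inv_subset_closure T h'

lemma aux_transversal (P Q : Subgroup G) (h : P.relIndex Q ≠ 0) :
    ∃ F : Set G, F.Finite ∧ ∀ u ∈ Q, ∃ f ∈ F, f⁻¹ * u ∈ P := by
  have : Fintype (Q ⧸ P.subgroupOf Q) := Subgroup.fintypeOfIndexNeZero h
  refine ⟨Set.range (fun c : Q ⧸ P.subgroupOf Q => ((Quotient.out c : Q) : G)),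
    Set.finite_range _, ?_⟩
  intro u hu
  refine ⟨_, ⟨QuotientGroup.mk (⟨u, hu⟩ : Q), rfl⟩, ?_⟩
  have h1 : (QuotientGroup.mk (Quotient.out (QuotientGroup.mk (s := P.subgroupOf Q)
      (⟨u, hu⟩ : Q))) : Q ⧸ P.subgroupOf Q)
      = QuotientGroup.mk (⟨u, hu⟩ : Q) := QuotientGroup.out_eq' _
  have h2 := QuotientGroup.eq.mp h1
  simpa [Subgroup.mem_subgroupOf] using h2

lemma aux_close {Q : Subgroup G} (hcomm : Commensurated Q) (g : G) :
    ∃ F : Set G, F.Finite ∧ ∀ u ∈ Q, ∃ q ∈ Q, u⁻¹ * (g * q) ∈ F := by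
  obtain ⟨F, hFfin, hF⟩ :=
    aux_transversal (Q.map (MulAut.conj g).toMonoidHom ⊓ Q) Q (hcomm g).1
  refine ⟨F * {g}, hFfin.mul (Set.finite_singleton g), ?_⟩
  intro u hu
  obtain ⟨f, hf, hfu⟩ := hF u⁻¹ (Q.inv_mem hu)
  have hmap : (f⁻¹ * u⁻¹)⁻¹ ∈ Q.map (MulAut.conj g).toMonoidHom :=
    Subgroup.inv_mem _ (Subgroup.mem_inf.mp hfu).1
  obtain ⟨q, hq, hconj⟩ := Subgroup.mem_map.mp hmap
  have hconj' : g * q * g⁻¹ = u * f := by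
    have : (MulAut.conj g) q = (f⁻¹ * u⁻¹)⁻¹ := hconj
    simpa [MulAut.conj_apply, mul_inv_rev] using this
  refine ⟨q, hq, ?_⟩
  have h3 : g * q = u * f * g := by
    have := congrArg (fun z => z * g) hconj'
    simpa [mul_assoc] using this
  have h4 : u⁻¹ * (g * q) = f * g := by rw [h3]; group
  rw [h4]
  exact Set.mul_mem_mul hf rfl

lemma aux_first_exit {U : Set G} :
    ∀ (l : List G) (a : G) (K : Set G), a ∈ K → (∀ t ∈ l, t ∈ U) →
      a * l.prod ∉ K → ∃ b t, b ∈ K ∧ t ∈ U ∧ b * t ∉ K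
  | [], a, K, ha, _, hout => by simp at hout; exact absurd ha hout
  | t :: l, a, K, ha, hl, hout => by
      by_cases hat : a * t ∈ K
      · exact aux_first_exit l (a * t) K hat (fun s hs => hl s (by simp [hs]))
          (by simpa [mul_assoc] using hout)
      · exact ⟨a, t, ha, hl t (by simp), hat⟩

lemma aux_finite_bad {T C : Set G} (hTfin : T.Finite) (hC : C.Finite)
    (hQinf : ((Subgroup.closure T : Subgroup G) : Set G).Infinite) :
    {x : G | x ∉ C ∧ {z | ConnAvoiding T C x z}.Finite}.Finite := by
  have hC' : (C * (T ∪ T⁻¹)⁻¹).Finite := hC.mul ((hTfin.union hTfin.inv).inv)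
  have hfin : ∀ c : G,
      {z | ConnAvoiding T C c z ∧ {z' | ConnAvoiding T C c z'}.Finite}.Finite := by
    intro c
    by_cases hf : {z' | ConnAvoiding T C c z'}.Finite
    · exact hf.subset fun z hz => hz.1
    · have hempty : {z | ConnAvoiding T C c z ∧ {z' | ConnAvoiding T C c z'}.Finite} = ∅ :=
        Set.eq_empty_of_forall_notMem fun z hz => hf hz.2
      rw [hempty]; exact Set.finite_empty
  refine Set.Finite.subset (Set.Finite.biUnion hC' (fun c _ => hfin c)) ?_
  rintro x ⟨hxC, hKfin⟩
  have hinj : Set.InjOn (fun q => x * q) ((Subgroup.closure T : Subgroup G) : Set G) :=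
    fun a _ b _ h => mul_left_cancel h
  have hcoset : ((fun q => x * q) '' ((Subgroup.closure T : Subgroup G) : Set G)).Infinite :=
    Set.Infinite.image hinj hQinf
  obtain ⟨y, hy⟩ := (hcoset.diff (hKfin.union hC)).nonempty
  obtain ⟨⟨q, hq, rfl⟩, hyK⟩ := hy
  obtain ⟨l, hl, hlp⟩ := exists_list_subgroup hq
  obtain ⟨b, t, hbK, htU, hbtK⟩ := aux_first_exit l x {z | ConnAvoiding T C x z}
    Relation.ReflTransGen.refl hl
    (by rw [hlp]; exact fun h => hyK (Or.inl h))
  have hbC : b ∉ C := connAvoiding_notMem hxC hbK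
  have hbtC : b * t ∈ C := by
    by_contra hbtC
    exact hbtK (Relation.ReflTransGen.tail hbK ⟨hbC, hbtC, by simpa using htU⟩)
  refine Set.mem_biUnion (show b ∈ C * (T ∪ T⁻¹)⁻¹ from
    ⟨b * t, hbtC, t⁻¹, Set.inv_mem_inv.mpr htU, mul_inv_cancel_right b t⟩) ?_
  exact ⟨connAvoiding_symm hbK, hKfin.subset fun z hz => Relation.ReflTransGen.trans hbK hz⟩

end Aux

/-- If `Q` is an infinite, finitely generated, commensurated subgroup of infinite index in the
finitely generated group `G`, then the Cayley graph `Γ(G,S)` is one-ended: for each finite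
`C` there is a finite `D ⊇ C` such that any two elements outside `D` can be joined avoiding
`C`, and any two elements with infinite components of `G - C` lie in the same component. -/
theorem one_ended_of_commensurated {G : Type*} [Group G]
    (S : Set G) (hSfin : S.Finite) (hgen : Subgroup.closure S = ⊤)
    (Q : Subgroup G) (T : Set G) (hTS : T ⊆ S) (hT : Subgroup.closure T = Q)
    (hQinf : (Q : Set G).Infinite) (hcomm : Commensurated Q) (hindex : Q.index = 0) :
    ∀ C : Set G, C.Finite → ∃ D : Set G, C ⊆ D ∧ D.Finite ∧
      (∀ x ∉ D, ∀ y ∉ D, ConnAvoiding S C x y) ∧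
      (∀ x ∉ C, ∀ y ∉ C, {z | ConnAvoiding S C x z}.Infinite →
        {z | ConnAvoiding S C y z}.Infinite → ConnAvoiding S C x y) := by
  intro C hC
  have hTfin : T.Finite := hSfin.subset hTS
  have hclT : ((Subgroup.closure T : Subgroup G) : Set G).Infinite := by rw [hT]; exact hQinf
  -- a coset `h * Q` disjoint from `C`
  have hinfQuot : Infinite (G ⧸ Q) := by
    have h0 : Nat.card (G ⧸ Q) = 0 := hindex
    rcases Nat.card_eq_zero.mp h0 with h1 | h1
    · exact (h1.false (QuotientGroup.mk 1)).elim
    · exact h1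
  obtain ⟨cb, hcb⟩ := ((Set.infinite_univ (α := G ⧸ Q)).diff
    (hC.image (QuotientGroup.mk (s := Q)))).nonempty
  obtain ⟨h, rfl⟩ := QuotientGroup.mk_surjective cb
  have hdisjC : ∀ q ∈ Q, h * q ∉ C := by
    intro q hq hmem
    apply hcb.2
    refine ⟨h * q, hmem, ?_⟩
    rw [QuotientGroup.eq]
    have : (h * q)⁻¹ * h = q⁻¹ := by group
    rw [this]
    exact Q.inv_mem hq
  set B := {x : G | x ∉ C ∧ {z | ConnAvoiding T C x z}.Finite} with hBdef
  have hB : B.Finite := aux_finite_bad hTfin hC hclT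
  set D := C ∪ B with hDdef
  have hDfin : D.Finite := hC.union hB
  choose L hL1 hL2 using
    (fun w : G => exists_list_subgroup (show w ∈ Subgroup.closure S by rw [hgen]; trivial))
  have key : ∀ x ∉ D, ∃ v, (∃ q ∈ Q, v = h * q) ∧ ConnAvoiding S C x v := by
    intro x hxD
    have hxC : x ∉ C := fun h' => hxD (Or.inl h')
    have hKinf : {z | ConnAvoiding T C x z}.Infinite :=
      fun hfin => hxD (Or.inr ⟨hxC, hfin⟩)
    obtain ⟨F, hFfin, hF⟩ := aux_close hcomm (x⁻¹ * h)
    set N : Set G := ⋃ w ∈ F, ⋃ n ∈ Set.Iic (L w).length, C * {((L w).take n).prod⁻¹}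
      with hNdef
    have hNfin : N.Finite := hFfin.biUnion (fun w _ =>
      Set.Finite.biUnion (Set.finite_Iic _) (fun n _ => hC.mul (Set.finite_singleton _)))
    obtain ⟨p, hp⟩ := (hKinf.diff hNfin).nonempty
    have hxp : ConnAvoiding T C x p := hp.1
    have hpN : p ∉ N := hp.2
    have hup : x⁻¹ * p ∈ Q := by rw [← hT]; exact connAvoiding_mem_closure hxp
    obtain ⟨q, hq, hw⟩ := hF (x⁻¹ * p) hup
    set w := (x⁻¹ * p)⁻¹ * (x⁻¹ * h * q) with hwdef
    have hwpv : p * w = h * q := by rw [hwdef]; group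
    have hpre0 : ∀ n, n ≤ (L w).length → p * ((L w).take n).prod ∉ C := by
      intro n hn hmem
      apply hpN
      refine Set.mem_biUnion hw (Set.mem_biUnion (show n ∈ Set.Iic (L w).length from hn) ?_)
      exact ⟨p * ((L w).take n).prod, hmem, ((L w).take n).prod⁻¹, rfl,
        mul_inv_cancel_right _ _⟩
    have hpre : ∀ n, p * ((L w).take n).prod ∉ C := by
      intro n
      rcases le_total n (L w).length with hn | hn
      · exact hpre0 n hn
      · have h6 := hpre0 (L w).length le_rfl
        rw [List.take_length] at h6
        rwa [List.take_of_length_le hn]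
    have hjump : ConnAvoiding S C p (p * w) := by
      have h7 := connAvoiding_of_list (L w) p (hL1 w) hpre
      rwa [hL2 w] at h7
    refine ⟨h * q, ⟨q, hq, rfl⟩, ?_⟩
    have h8 := Relation.ReflTransGen.trans (connAvoiding_mono hTS hxp) hjump
    rwa [hwpv] at h8
  have main : ∀ x ∉ D, ∀ y ∉ D, ConnAvoiding S C x y := by
    intro x hx y hy
    obtain ⟨vx, ⟨q1, hq1, rfl⟩, hxv⟩ := key x hx
    obtain ⟨vy, ⟨q2, hq2, rfl⟩, hyv⟩ := key y hy
    have hmid : ConnAvoiding T C (h * q1) (h * q1 * (q1⁻¹ * q2)) := by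
      refine connAvoiding_coset ?_ ?_
      · rw [hT]; exact Q.mul_mem (Q.inv_mem hq1) hq2
      · intro q hq3
        have h9 : h * q1 * q = h * (q1 * q) := by group
        rw [h9]
        exact hdisjC _ (Q.mul_mem hq1 (by rwa [hT] at hq3))
    have hmid' : ConnAvoiding S C (h * q1) (h * q2) := by
      have h10 := connAvoiding_mono hTS hmid
      rwa [show h * q1 * (q1⁻¹ * q2) = h * q2 by group] at h10
    exact Relation.ReflTransGen.trans (Relation.ReflTransGen.trans hxv hmid')
      (connAvoiding_symm hyv)
  refine ⟨D, Set.subset_union_left, hDfin, main, ?_⟩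
  intro x hxC y hyC hxinf hyinf
  obtain ⟨z, hz⟩ := (hxinf.diff hDfin).nonempty
  obtain ⟨z', hz'⟩ := (hyinf.diff hDfin).nonempty
  exact Relation.ReflTransGen.trans hz.1
    (Relation.ReflTransGen.trans (main z hz.2 z' hz'.2) (connAvoiding_symm hz'.1))
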